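/- arXiv:1303.2956 — 3 statements merged into one kernel-verified Lean document; each statement's English description precedes it below -/
import Mathlib

section
/- Let γ(u,t) be a one-parameter family of smooth partially null curves in E⁴₁ with speed v = ‖∂γ/∂u‖ and partially null Frenet frame {T, N, B₁, B₂} with curvatures k₁, k₂ (and k₃ = 0), whose flow is ∂γ/∂t = β₁T + β₂N + β₃B₁ + β₄B₂. Then the speed evolves by ∂v/∂t = ∂β₁/∂u − β₂ k₁ v. -/
/-!
Formalization of inextensible flows of partially null / pseudo null curves in
Minkowski space-time `E⁴₁` (ℝ⁴ with signature (-,+,+,+)).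
-/

noncomputable section

/-- The Minkowski bilinear form on `ℝ⁴` with signature `(-,+,+,+)`. -/
def mink (v w : Fin 4 → ℝ) : ℝ :=
  -(v 0 * w 0) + v 1 * w 1 + v 2 * w 2 + v 3 * w 3

/-- The Minkowski norm `‖v‖ = √|⟨v,v⟩|`. -/
def mnorm (v : Fin 4 → ℝ) : ℝ := Real.sqrt |mink v v|


section SpeedEvolutionHelpers

private lemma mink_add_left' (a b c : Fin 4 → ℝ) : mink (a + b) c = mink a c + mink b c := by
  simp [mink]; ring

private lemma mink_smul_left' (r : ℝ) (a b : Fin 4 → ℝ) : mink (r • a) b = r * mink a b := by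
  simp [mink]; ring

private lemma mink_zero_left' (b : Fin 4 → ℝ) : mink 0 b = 0 := by simp [mink]

private lemma mink_comm' (a b : Fin 4 → ℝ) : mink a b = mink b a := by simp [mink]; ring

private lemma HasDerivAt.mink' {f g : ℝ → Fin 4 → ℝ} {f' g' : Fin 4 → ℝ} {x : ℝ}
    (hf : HasDerivAt f f' x) (hg : HasDerivAt g g' x) :
    HasDerivAt (fun y => mink (f y) (g y)) (mink f' (g x) + mink (f x) g') x := by
  have hfc : ∀ i : Fin 4, HasDerivAt (fun y => f y i) (f' i) x := fun i => by
    exact ((ContinuousLinearMap.proj i : (Fin 4 → ℝ) →L[ℝ] ℝ).hasFDerivAt).comp_hasDerivAt x hf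
  have hgc : ∀ i : Fin 4, HasDerivAt (fun y => g y i) (g' i) x := fun i => by
    exact ((ContinuousLinearMap.proj i : (Fin 4 → ℝ) →L[ℝ] ℝ).hasFDerivAt).comp_hasDerivAt x hg
  have h := ((((hfc 0).mul (hgc 0)).neg.add ((hfc 1).mul (hgc 1))).add
      ((hfc 2).mul (hgc 2))).add ((hfc 3).mul (hgc 3))
  convert h using 1
  · rfl
  · rfl
  · funext y; simp [mink]
  · simp [mink]; ring

private lemma hasDerivAt_slice1 {E : Type*} [NormedAddCommGroup E] [NormedSpace ℝ E]
    {F : ℝ × ℝ → E} (hF : Differentiable ℝ F) (u t : ℝ) :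
    HasDerivAt (fun x => F (x, t)) (fderiv ℝ F (u, t) (1, 0)) u := by
  have h1 : HasDerivAt (fun x : ℝ => (x, t)) ((1:ℝ), (0:ℝ)) u := by
    simpa using (hasDerivAt_id u).prodMk (hasDerivAt_const u t)
  exact (hF (u,t)).hasFDerivAt.comp_hasDerivAt u h1

private lemma hasDerivAt_slice2 {E : Type*} [NormedAddCommGroup E] [NormedSpace ℝ E]
    {F : ℝ × ℝ → E} (hF : Differentiable ℝ F) (u t : ℝ) :
    HasDerivAt (fun x => F (u, x)) (fderiv ℝ F (u, t) (0, 1)) t := by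
  have h1 : HasDerivAt (fun x : ℝ => (u, x)) ((0:ℝ), (1:ℝ)) t := by
    simpa using (hasDerivAt_const t u).prodMk (hasDerivAt_id t)
  exact (hF (u,t)).hasFDerivAt.comp_hasDerivAt t h1

/-- Clairaut-type symmetry of mixed partials for smooth functions on `ℝ × ℝ`. -/
private lemma deriv_swap_aux {E : Type*} [NormedAddCommGroup E] [NormedSpace ℝ E]
    {F : ℝ × ℝ → E} (hF : ContDiff ℝ (⊤ : ℕ∞) F) (u t : ℝ) :
    HasDerivAt (fun x => deriv (fun y => F (y, x)) u)
      (deriv (fun y => deriv (fun x => F (y, x)) t) u) t := by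
  have hFd : Differentiable ℝ F := hF.differentiable (by simp)
  have hG : ContDiff ℝ (⊤ : ℕ∞) (fderiv ℝ F) := hF.fderiv_right (by simp)
  have hGd : Differentiable ℝ (fderiv ℝ F) :=
    hG.differentiable (by simp)
  set G := fderiv ℝ F with hGdef
  have e1 : (fun x => deriv (fun y => F (y, x)) u) = fun x => G (u, x) (1, 0) := by
    funext x
    exact (hasDerivAt_slice1 hFd u x).deriv
  have e2 : (fun y => deriv (fun x => F (y, x)) t) = fun y => G (y, t) (0, 1) := by
    funext y
    exact (hasDerivAt_slice2 hFd y t).deriv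
  rw [e1, e2]
  have hsym : fderiv ℝ G (u, t) (0, 1) (1, 0) = fderiv ℝ G (u, t) (1, 0) (0, 1) := by
    have h2n : (2 : WithTop ℕ∞) ≤ ((⊤:ℕ∞) : WithTop ℕ∞) := by
      rw [show ((2 : WithTop ℕ∞)) = (((2:ℕ∞)) : WithTop ℕ∞) from rfl]
      exact WithTop.coe_le_coe.2 le_top
    exact (hF.contDiffAt (x := (u, t))).isSymmSndFDerivAt (by rw [minSmoothness_of_isRCLikeNormedField]; exact h2n) (0,1) (1,0)
  have h2 : HasDerivAt (fun x => G (u, x) (1, 0)) (fderiv ℝ G (u, t) (0, 1) (1, 0)) t :=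
    (ContinuousLinearMap.apply ℝ E ((1:ℝ), (0:ℝ))).hasFDerivAt.comp_hasDerivAt t
      (hasDerivAt_slice2 hGd u t)
  have h3 : HasDerivAt (fun y => G (y, t) (0, 1)) (fderiv ℝ G (u, t) (1, 0) (0, 1)) u :=
    (ContinuousLinearMap.apply ℝ E ((0:ℝ), (1:ℝ))).hasFDerivAt.comp_hasDerivAt u
      (hasDerivAt_slice1 hGd u t)
  rw [h3.deriv, ← hsym]
  exact h2

end SpeedEvolutionHelpers

theorem speed_evolution_partially_null
    (γ T N B₁ B₂ : ℝ → ℝ → (Fin 4 → ℝ))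
    (v k₁ k₂ β₁ β₂ β₃ β₄ : ℝ → ℝ → ℝ)
    (hγsmooth : ContDiff ℝ (⊤ : ℕ∞) (fun p : ℝ × ℝ => γ p.1 p.2))
    (hTsmooth : ContDiff ℝ (⊤ : ℕ∞) (fun p : ℝ × ℝ => T p.1 p.2))
    (hNsmooth : ContDiff ℝ (⊤ : ℕ∞) (fun p : ℝ × ℝ => N p.1 p.2))
    (hB₁smooth : ContDiff ℝ (⊤ : ℕ∞) (fun p : ℝ × ℝ => B₁ p.1 p.2))
    (hB₂smooth : ContDiff ℝ (⊤ : ℕ∞) (fun p : ℝ × ℝ => B₂ p.1 p.2))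
    (hk₁smooth : ContDiff ℝ (⊤ : ℕ∞) (fun p : ℝ × ℝ => k₁ p.1 p.2))
    (hk₂smooth : ContDiff ℝ (⊤ : ℕ∞) (fun p : ℝ × ℝ => k₂ p.1 p.2))
    (hβ₁smooth : ContDiff ℝ (⊤ : ℕ∞) (fun p : ℝ × ℝ => β₁ p.1 p.2))
    (hβ₂smooth : ContDiff ℝ (⊤ : ℕ∞) (fun p : ℝ × ℝ => β₂ p.1 p.2))
    (hβ₃smooth : ContDiff ℝ (⊤ : ℕ∞) (fun p : ℝ × ℝ => β₃ p.1 p.2))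
    (hβ₄smooth : ContDiff ℝ (⊤ : ℕ∞) (fun p : ℝ × ℝ => β₄ p.1 p.2))
    (hTT : ∀ u t : ℝ, mink (T u t) (T u t) = 1)
    (hNN : ∀ u t : ℝ, mink (N u t) (N u t) = 1)
    (hB₁B₁ : ∀ u t : ℝ, mink (B₁ u t) (B₁ u t) = 0)
    (hB₂B₂ : ∀ u t : ℝ, mink (B₂ u t) (B₂ u t) = 0)
    (hB₁B₂ : ∀ u t : ℝ, mink (B₁ u t) (B₂ u t) = 1)
    (hTN : ∀ u t : ℝ, mink (T u t) (N u t) = 0)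
    (hTB₁ : ∀ u t : ℝ, mink (T u t) (B₁ u t) = 0)
    (hTB₂ : ∀ u t : ℝ, mink (T u t) (B₂ u t) = 0)
    (hNB₁ : ∀ u t : ℝ, mink (N u t) (B₁ u t) = 0)
    (hNB₂ : ∀ u t : ℝ, mink (N u t) (B₂ u t) = 0)
    -- speed, tangent and Frenet equations (∂/∂s = (1/v)∂/∂u, k₃ = 0)
    (hv : ∀ u t : ℝ, v u t = mnorm (deriv (fun x => γ x t) u))
    (hvpos : ∀ u t : ℝ, 0 < v u t)
    (hT : ∀ u t : ℝ, deriv (fun x => γ x t) u = v u t • T u t)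
    (hfr₁ : ∀ u t : ℝ, deriv (fun x => T x t) u = (v u t * k₁ u t) • N u t)
    (hfr₂ : ∀ u t : ℝ, deriv (fun x => N x t) u =
      (v u t * -(k₁ u t)) • T u t + (v u t * k₂ u t) • B₁ u t)
    (hfr₃ : ∀ u t : ℝ, deriv (fun x => B₁ x t) u = 0)
    (hfr₄ : ∀ u t : ℝ, deriv (fun x => B₂ x t) u = (v u t * -(k₂ u t)) • N u t)
    (hflow : ∀ u t : ℝ, deriv (fun x => γ u x) t =
      β₁ u t • T u t + β₂ u t • N u t + β₃ u t • B₁ u t + β₄ u t • B₂ u t) :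
    ∀ u t : ℝ, deriv (fun x => v u x) t =
      deriv (fun x => β₁ x t) u - β₂ u t * k₁ u t * v u t := by
  intro u t
  have hle : ((⊤:ℕ∞) : WithTop ℕ∞) ≠ 0 := by simp
  have hγd : Differentiable ℝ (fun p : ℝ × ℝ => γ p.1 p.2) := hγsmooth.differentiable hle
  have hTd : Differentiable ℝ (fun p : ℝ × ℝ => T p.1 p.2) := hTsmooth.differentiable hle
  have hNd : Differentiable ℝ (fun p : ℝ × ℝ => N p.1 p.2) := hNsmooth.differentiable hle
  have hB₁d : Differentiable ℝ (fun p : ℝ × ℝ => B₁ p.1 p.2) := hB₁smooth.differentiable hle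
  have hB₂d : Differentiable ℝ (fun p : ℝ × ℝ => B₂ p.1 p.2) := hB₂smooth.differentiable hle
  have hβ₁d : Differentiable ℝ (fun p : ℝ × ℝ => β₁ p.1 p.2) := hβ₁smooth.differentiable hle
  have hβ₂d : Differentiable ℝ (fun p : ℝ × ℝ => β₂ p.1 p.2) := hβ₂smooth.differentiable hle
  have hβ₃d : Differentiable ℝ (fun p : ℝ × ℝ => β₃ p.1 p.2) := hβ₃smooth.differentiable hle
  have hβ₄d : Differentiable ℝ (fun p : ℝ × ℝ => β₄ p.1 p.2) := hβ₄smooth.differentiable hle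
  -- Frenet frame slices in the u-direction
  have hTu : HasDerivAt (fun y => T y t) ((v u t * k₁ u t) • N u t) u := by
    have h := hasDerivAt_slice1 hTd u t
    have e : fderiv ℝ (fun p : ℝ × ℝ => T p.1 p.2) (u, t) (1, 0)
        = deriv (fun x => T x t) u := h.deriv.symm
    rw [e, hfr₁] at h; exact h
  have hNu : HasDerivAt (fun y => N y t)
      ((v u t * -(k₁ u t)) • T u t + (v u t * k₂ u t) • B₁ u t) u := by
    have h := hasDerivAt_slice1 hNd u t
    have e : fderiv ℝ (fun p : ℝ × ℝ => N p.1 p.2) (u, t) (1, 0)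
        = deriv (fun x => N x t) u := h.deriv.symm
    rw [e, hfr₂] at h; exact h
  have hB₁u : HasDerivAt (fun y => B₁ y t) 0 u := by
    have h := hasDerivAt_slice1 hB₁d u t
    have e : fderiv ℝ (fun p : ℝ × ℝ => B₁ p.1 p.2) (u, t) (1, 0)
        = deriv (fun x => B₁ x t) u := h.deriv.symm
    rw [e, hfr₃] at h; exact h
  have hB₂u : HasDerivAt (fun y => B₂ y t) ((v u t * -(k₂ u t)) • N u t) u := by
    have h := hasDerivAt_slice1 hB₂d u t
    have e : fderiv ℝ (fun p : ℝ × ℝ => B₂ p.1 p.2) (u, t) (1, 0)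
        = deriv (fun x => B₂ x t) u := h.deriv.symm
    rw [e, hfr₄] at h; exact h
  -- coefficient slices in the u-direction
  have hβ₁u : HasDerivAt (fun y => β₁ y t) (deriv (fun y => β₁ y t) u) u :=
    (hasDerivAt_slice1 hβ₁d u t).differentiableAt.hasDerivAt
  have hβ₂u : HasDerivAt (fun y => β₂ y t) (deriv (fun y => β₂ y t) u) u :=
    (hasDerivAt_slice1 hβ₂d u t).differentiableAt.hasDerivAt
  have hβ₃u : HasDerivAt (fun y => β₃ y t) (deriv (fun y => β₃ y t) u) u :=
    (hasDerivAt_slice1 hβ₃d u t).differentiableAt.hasDerivAt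
  have hβ₄u : HasDerivAt (fun y => β₄ y t) (deriv (fun y => β₄ y t) u) u :=
    (hasDerivAt_slice1 hβ₄d u t).differentiableAt.hasDerivAt
  -- tangent slice in the t-direction
  have hTt : HasDerivAt (fun x => T u x) (deriv (fun x => T u x) t) t :=
    (hasDerivAt_slice2 hTd u t).differentiableAt.hasDerivAt
  set T' := deriv (fun x => T u x) t with hT'def
  -- derivative of the flow in the u-direction
  have hD := (((hβ₁u.smul hTu).add (hβ₂u.smul hNu)).add (hβ₃u.smul hB₁u)).add
    (hβ₄u.smul hB₂u)
  set D := β₁ u t • (v u t * k₁ u t) • N u t + deriv (fun y => β₁ y t) u • T u t +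
      (β₂ u t • ((v u t * -(k₁ u t)) • T u t + (v u t * k₂ u t) • B₁ u t) +
        deriv (fun y => β₂ y t) u • N u t) +
      (β₃ u t • (0 : Fin 4 → ℝ) + deriv (fun y => β₃ y t) u • B₁ u t) +
      (β₄ u t • (v u t * -(k₂ u t)) • N u t + deriv (fun y => β₄ y t) u • B₂ u t)
    with hDdef
  have hDeq : deriv (fun y => deriv (fun x => γ y x) t) u = D := by
    have hflowfun : (fun y => deriv (fun x => γ y x) t)
        = fun y => β₁ y t • T y t + β₂ y t • N y t + β₃ y t • B₁ y t + β₄ y t • B₂ y t :=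
      funext fun y => hflow y t
    rw [hflowfun]
    exact hD.deriv
  -- mixed partial: t-derivative of γ_u
  have hmix : HasDerivAt (fun x => deriv (fun y => γ y x) u) D t := by
    have h := deriv_swap_aux (F := fun p : ℝ × ℝ => γ p.1 p.2) hγsmooth u t
    rw [show deriv (fun y => deriv (fun x => (fun p : ℝ × ℝ => γ p.1 p.2) (y, x)) t) u = D
      from hDeq] at h
    exact h
  -- v as a function of t
  have hvfun : (fun x => v u x) = fun x => mink (deriv (fun y => γ y x) u) (T u x) := by
    funext x
    rw [hT u x, mink_smul_left', hTT, mul_one]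
  have hVt : HasDerivAt (fun x => v u x)
      (mink D (T u t) + mink (deriv (fun y => γ y t) u) T') t := by
    rw [hvfun]
    exact hmix.mink' hTt
  -- ⟨T, T'⟩ = 0
  have hTT' : mink (T u t) T' = 0 := by
    have hconst : HasDerivAt (fun x => mink (T u x) (T u x))
        (mink T' (T u t) + mink (T u t) T') t := hTt.mink' hTt
    have hc : (fun x => mink (T u x) (T u x)) = fun _ => (1:ℝ) := funext fun x => hTT u x
    rw [hc] at hconst
    have h0 := hconst.unique (hasDerivAt_const t 1)
    have hcomm := mink_comm' T' (T u t)
    linarith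
  have hsecond : mink (deriv (fun y => γ y t) u) T' = 0 := by
    rw [hT u t, mink_smul_left', hTT', mul_zero]
  -- orthogonality facts
  have hNT : mink (N u t) (T u t) = 0 := (mink_comm' _ _).trans (hTN u t)
  have hB₁T : mink (B₁ u t) (T u t) = 0 := (mink_comm' _ _).trans (hTB₁ u t)
  have hB₂T : mink (B₂ u t) (T u t) = 0 := (mink_comm' _ _).trans (hTB₂ u t)
  rw [hVt.deriv, hsecond, add_zero, hDdef]
  simp only [mink_add_left', mink_smul_left', mink_zero_left', hTT u t, hNT, hB₁T, hB₂T]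
  ring
end
end

section
/- Let γ(s,t) be an arclength-parametrized inextensible flow of partially null curves in E⁴₁ with partially null Frenet frame {T, N, B₁, B₂}, curvatures k₁, k₂ (k₃ = 0), and flow ∂γ/∂t = β₁T + β₂N + β₃B₁ + β₄B₂ (so that ∂β₁/∂s = β₂k₁). Then the tangent evolves by ∂T/∂t = (∂β₂/∂s + β₁k₁ − β₄k₂) N + (∂β₃/∂s + β₂k₂) B₁ + (∂β₄/∂s) B₂. -/
/-!
Formalization of inextensible flows of partially null / pseudo null curves in
Minkowski space-time `E⁴₁` (ℝ⁴ with signature (-,+,+,+)).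
-/

noncomputable section

section AuxMixed

variable {V : Type*} [NormedAddCommGroup V] [NormedSpace ℝ V]

lemma partial_fst_deriv (f : ℝ × ℝ → V) (hf : Differentiable ℝ f) (s t : ℝ) :
    deriv (fun x => f (x, t)) s = fderiv ℝ f (s, t) ((1 : ℝ), (0 : ℝ)) := by
  have h1 : HasDerivAt (fun x : ℝ => (x, t)) ((1 : ℝ), (0 : ℝ)) s :=
    HasDerivAt.prodMk (hasDerivAt_id s) (hasDerivAt_const s t)
  exact ((hf (s, t)).hasFDerivAt.comp_hasDerivAt s h1).deriv

lemma partial_snd_deriv (f : ℝ × ℝ → V) (hf : Differentiable ℝ f) (s t : ℝ) :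
    deriv (fun y => f (s, y)) t = fderiv ℝ f (s, t) ((0 : ℝ), (1 : ℝ)) := by
  have h1 : HasDerivAt (fun y : ℝ => (s, y)) ((0 : ℝ), (1 : ℝ)) t :=
    HasDerivAt.prodMk (hasDerivAt_const t s) (hasDerivAt_id t)
  exact ((hf (s, t)).hasFDerivAt.comp_hasDerivAt t h1).deriv

lemma fderiv_apply_vec (f : ℝ × ℝ → V) (hf : ContDiff ℝ (⊤ : ℕ∞) f)
    (v : ℝ × ℝ) (p : ℝ × ℝ) :
    fderiv ℝ (fun q => fderiv ℝ f q v) p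
      = (ContinuousLinearMap.apply ℝ V v).comp (fderiv ℝ (fderiv ℝ f) p) := by
  have hddiff : Differentiable ℝ (fderiv ℝ f) :=
    (hf.fderiv_right (m := (⊤ : ℕ∞)) (by decide)).differentiable (by decide)
  have : (fun q => fderiv ℝ f q v) = (ContinuousLinearMap.apply ℝ V v) ∘ (fderiv ℝ f) := rfl
  rw [this, fderiv_comp p (ContinuousLinearMap.apply ℝ V v).differentiableAt (hddiff p),
    ContinuousLinearMap.fderiv]

lemma mixed_partials (f : ℝ × ℝ → V) (hf : ContDiff ℝ (⊤ : ℕ∞) f) (s t : ℝ) :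
    deriv (fun y => deriv (fun x => f (x, y)) s) t
      = deriv (fun x => deriv (fun y => f (x, y)) t) s := by
  have hdiff : Differentiable ℝ f := hf.differentiable (by decide)
  have hddiff : Differentiable ℝ (fderiv ℝ f) :=
    (hf.fderiv_right (m := (⊤ : ℕ∞)) (by decide)).differentiable (by decide)
  have hsymm : IsSymmSndFDerivAt ℝ f (s, t) :=
    hf.contDiffAt.isSymmSndFDerivAt (by simp; exact (WithTop.coe_le_coe.mpr (le_top : (2 : ℕ∞) ≤ ⊤) : ((2 : ℕ∞) : WithTop ℕ∞) ≤ _))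
  have hg₁ : Differentiable ℝ (fun q => fderiv ℝ f q ((1 : ℝ), (0 : ℝ))) :=
    (ContinuousLinearMap.apply ℝ V ((1 : ℝ), (0 : ℝ))).differentiable.comp hddiff
  have hg₂ : Differentiable ℝ (fun q => fderiv ℝ f q ((0 : ℝ), (1 : ℝ))) :=
    (ContinuousLinearMap.apply ℝ V ((0 : ℝ), (1 : ℝ))).differentiable.comp hddiff
  have e1 : (fun y => deriv (fun x => f (x, y)) s)
      = fun y => fderiv ℝ f (s, y) ((1 : ℝ), (0 : ℝ)) := by
    funext y; exact partial_fst_deriv f hdiff s y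
  have e2 : (fun x => deriv (fun y => f (x, y)) t)
      = fun x => fderiv ℝ f (x, t) ((0 : ℝ), (1 : ℝ)) := by
    funext x; exact partial_snd_deriv f hdiff x t
  rw [e1, e2]
  rw [partial_snd_deriv _ hg₁ s t, partial_fst_deriv _ hg₂ s t,
    fderiv_apply_vec f hf _ _, fderiv_apply_vec f hf _ _]
  simpa using hsymm ((0 : ℝ), (1 : ℝ)) ((1 : ℝ), (0 : ℝ))

lemma diff_partial_fst (g : ℝ → ℝ → V)
    (hg : ContDiff ℝ (⊤ : ℕ∞) (fun p : ℝ × ℝ => g p.1 p.2)) (t : ℝ) :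
    Differentiable ℝ (fun x => g x t) :=
  (hg.differentiable (by decide)).comp (differentiable_id.prodMk (differentiable_const t))

end AuxMixed

theorem tangent_evolution_partially_null
    (γ T N B₁ B₂ : ℝ → ℝ → (Fin 4 → ℝ))
    (k₁ k₂ β₁ β₂ β₃ β₄ : ℝ → ℝ → ℝ)
    (hγsmooth : ContDiff ℝ (⊤ : ℕ∞) (fun p : ℝ × ℝ => γ p.1 p.2))
    (hTsmooth : ContDiff ℝ (⊤ : ℕ∞) (fun p : ℝ × ℝ => T p.1 p.2))
    (hNsmooth : ContDiff ℝ (⊤ : ℕ∞) (fun p : ℝ × ℝ => N p.1 p.2))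
    (hB₁smooth : ContDiff ℝ (⊤ : ℕ∞) (fun p : ℝ × ℝ => B₁ p.1 p.2))
    (hB₂smooth : ContDiff ℝ (⊤ : ℕ∞) (fun p : ℝ × ℝ => B₂ p.1 p.2))
    (hk₁smooth : ContDiff ℝ (⊤ : ℕ∞) (fun p : ℝ × ℝ => k₁ p.1 p.2))
    (hk₂smooth : ContDiff ℝ (⊤ : ℕ∞) (fun p : ℝ × ℝ => k₂ p.1 p.2))
    (hβ₁smooth : ContDiff ℝ (⊤ : ℕ∞) (fun p : ℝ × ℝ => β₁ p.1 p.2))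
    (hβ₂smooth : ContDiff ℝ (⊤ : ℕ∞) (fun p : ℝ × ℝ => β₂ p.1 p.2))
    (hβ₃smooth : ContDiff ℝ (⊤ : ℕ∞) (fun p : ℝ × ℝ => β₃ p.1 p.2))
    (hβ₄smooth : ContDiff ℝ (⊤ : ℕ∞) (fun p : ℝ × ℝ => β₄ p.1 p.2))
    (hTT : ∀ s t : ℝ, mink (T s t) (T s t) = 1)
    (hNN : ∀ s t : ℝ, mink (N s t) (N s t) = 1)
    (hB₁B₁ : ∀ s t : ℝ, mink (B₁ s t) (B₁ s t) = 0)
    (hB₂B₂ : ∀ s t : ℝ, mink (B₂ s t) (B₂ s t) = 0)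
    (hB₁B₂ : ∀ s t : ℝ, mink (B₁ s t) (B₂ s t) = 1)
    (hTN : ∀ s t : ℝ, mink (T s t) (N s t) = 0)
    (hTB₁ : ∀ s t : ℝ, mink (T s t) (B₁ s t) = 0)
    (hTB₂ : ∀ s t : ℝ, mink (T s t) (B₂ s t) = 0)
    (hNB₁ : ∀ s t : ℝ, mink (N s t) (B₁ s t) = 0)
    (hNB₂ : ∀ s t : ℝ, mink (N s t) (B₂ s t) = 0)
    -- arclength parametrization and Frenet equations (k₃ = 0)
    (hT : ∀ s t : ℝ, T s t = deriv (fun x => γ x t) s)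
    (hunit : ∀ s t : ℝ, mnorm (deriv (fun x => γ x t) s) = 1)
    (hfr₁ : ∀ s t : ℝ, deriv (fun x => T x t) s = k₁ s t • N s t)
    (hfr₂ : ∀ s t : ℝ, deriv (fun x => N x t) s = -(k₁ s t) • T s t + k₂ s t • B₁ s t)
    (hfr₃ : ∀ s t : ℝ, deriv (fun x => B₁ x t) s = 0)
    (hfr₄ : ∀ s t : ℝ, deriv (fun x => B₂ x t) s = -(k₂ s t) • N s t)
    (hflow : ∀ s t : ℝ, deriv (fun x => γ s x) t =
      β₁ s t • T s t + β₂ s t • N s t + β₃ s t • B₁ s t + β₄ s t • B₂ s t)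
    -- inextensibility: ∂β₁/∂s = β₂k₁
    (hinext : ∀ s t : ℝ, deriv (fun x => β₁ x t) s = β₂ s t * k₁ s t) :
    ∀ s t : ℝ, deriv (fun x => T s x) t =
      (deriv (fun x => β₂ x t) s + β₁ s t * k₁ s t - β₄ s t * k₂ s t) • N s t +
      (deriv (fun x => β₃ x t) s + β₂ s t * k₂ s t) • B₁ s t +
      (deriv (fun x => β₄ x t) s) • B₂ s t := by
  intro s t
  have dT := diff_partial_fst T hTsmooth t
  have dN := diff_partial_fst N hNsmooth t
  have dB₁ := diff_partial_fst B₁ hB₁smooth t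
  have dB₂ := diff_partial_fst B₂ hB₂smooth t
  have dβ₁ := diff_partial_fst β₁ hβ₁smooth t
  have dβ₂ := diff_partial_fst β₂ hβ₂smooth t
  have dβ₃ := diff_partial_fst β₃ hβ₃smooth t
  have dβ₄ := diff_partial_fst β₄ hβ₄smooth t
  have hTt : (fun x => T s x) = fun y => deriv (fun x => γ x y) s := by
    funext y; exact hT s y
  have hmix : deriv (fun y => deriv (fun x => γ x y) s) t
      = deriv (fun x => deriv (fun y => γ x y) t) s :=
    mixed_partials (fun p : ℝ × ℝ => γ p.1 p.2) hγsmooth s t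
  have hflow' : (fun x => deriv (fun y => γ x y) t)
      = fun x => β₁ x t • T x t + β₂ x t • N x t + β₃ x t • B₁ x t + β₄ x t • B₂ x t := by
    funext x; exact hflow x t
  rw [hTt, hmix, hflow']
  have hTd : HasDerivAt (fun x => T x t) (k₁ s t • N s t) s := by
    have := (dT s).hasDerivAt; rwa [hfr₁ s t] at this
  have hNd : HasDerivAt (fun x => N x t) (-(k₁ s t) • T s t + k₂ s t • B₁ s t) s := by
    have := (dN s).hasDerivAt; rwa [hfr₂ s t] at this
  have hB₁d : HasDerivAt (fun x => B₁ x t) 0 s := by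
    have := (dB₁ s).hasDerivAt; rwa [hfr₃ s t] at this
  have hB₂d : HasDerivAt (fun x => B₂ x t) (-(k₂ s t) • N s t) s := by
    have := (dB₂ s).hasDerivAt; rwa [hfr₄ s t] at this
  have hβ₁d : HasDerivAt (fun x => β₁ x t) (β₂ s t * k₁ s t) s := by
    have := (dβ₁ s).hasDerivAt; rwa [hinext s t] at this
  have hβ₂d : HasDerivAt (fun x => β₂ x t) (deriv (fun x => β₂ x t) s) s :=
    (dβ₂ s).hasDerivAt
  have hβ₃d : HasDerivAt (fun x => β₃ x t) (deriv (fun x => β₃ x t) s) s :=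
    (dβ₃ s).hasDerivAt
  have hβ₄d : HasDerivAt (fun x => β₄ x t) (deriv (fun x => β₄ x t) s) s :=
    (dβ₄ s).hasDerivAt
  have hsum := (((hβ₁d.smul hTd).add (hβ₂d.smul hNd)).add (hβ₃d.smul hB₁d)).add
    (hβ₄d.smul hB₂d)
  rw [HasDerivAt.deriv (f := fun x => β₁ x t • T x t + β₂ x t • N x t + β₃ x t • B₁ x t + β₄ x t • B₂ x t) hsum]
  module
end
end

section
/- Let γ(s,t) be an arclength-parametrized inextensible flow of pseudo null curves in E⁴₁ with pseudo null Frenet frame {T, N, B₁, B₂}, curvatures k₁ = 1, k₂, k₃, and flow ∂γ/∂t = α₁T + α₂N + α₃B₁ + α₄B₂ (so ∂α₁/∂s = α₄). Then the tangent evolves by ∂T/∂t = (∂α₂/∂s + α₁ + α₃k₃) N + (∂α₃/∂s + α₂k₂ − α₄k₃) B₁ + (∂α₄/∂s − α₃k₂) B₂. -/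
/-!
Formalization of inextensible flows of partially null / pseudo null curves in
Minkowski space-time `E⁴₁` (ℝ⁴ with signature (-,+,+,+)).
-/

noncomputable section

section Helpers

variable {E : Type*} [NormedAddCommGroup E] [NormedSpace ℝ E]

lemma pd_fst (F : ℝ × ℝ → E) (hF : ContDiff ℝ (⊤ : ℕ∞) F) (s t : ℝ) :
    HasDerivAt (fun x => F (x, t)) (fderiv ℝ F (s, t) (1, 0)) s := by
  have h1 : HasDerivAt (fun x : ℝ => (x, t)) ((1 : ℝ), (0 : ℝ)) s :=
    (hasDerivAt_id s).prodMk (hasDerivAt_const s t)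
  exact ((hF.differentiable (by simp) (s, t)).hasFDerivAt).comp_hasDerivAt s h1

lemma pd_snd (F : ℝ × ℝ → E) (hF : ContDiff ℝ (⊤ : ℕ∞) F) (s t : ℝ) :
    HasDerivAt (fun x => F (s, x)) (fderiv ℝ F (s, t) (0, 1)) t := by
  have h1 : HasDerivAt (fun x : ℝ => (s, x)) ((0 : ℝ), (1 : ℝ)) t :=
    (hasDerivAt_const t s).prodMk (hasDerivAt_id t)
  exact ((hF.differentiable (by simp) (s, t)).hasFDerivAt).comp_hasDerivAt t h1

lemma mixed_partial (F : ℝ × ℝ → E) (hF : ContDiff ℝ (⊤ : ℕ∞) F) (s t : ℝ) :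
    deriv (fun x => deriv (fun y => F (y, x)) s) t
      = deriv (fun y => deriv (fun x => F (y, x)) t) s := by
  have hG : ContDiff ℝ (⊤ : ℕ∞) (fderiv ℝ F) := hF.fderiv_right (mod_cast le_top)
  have hsym : IsSymmSndFDerivAt ℝ F (s, t) :=
    hF.contDiffAt.isSymmSndFDerivAt (by rw [minSmoothness_of_isRCLikeNormedField]; exact WithTop.coe_le_coe.mpr le_top)
  have h1 : ∀ x : ℝ, deriv (fun y => F (y, x)) s = fderiv ℝ F (s, x) ((1 : ℝ), (0 : ℝ)) :=
    fun x => (pd_fst F hF s x).deriv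
  have h2 : ∀ y : ℝ, deriv (fun x => F (y, x)) t = fderiv ℝ F (y, t) ((0 : ℝ), (1 : ℝ)) :=
    fun y => (pd_snd F hF y t).deriv
  have l1 : HasDerivAt (fun x => fderiv ℝ F (s, x) ((1 : ℝ), (0 : ℝ)))
      (fderiv ℝ (fderiv ℝ F) (s, t) ((0 : ℝ), (1 : ℝ)) ((1 : ℝ), (0 : ℝ))) t :=
    (ContinuousLinearMap.apply ℝ E ((1 : ℝ), (0 : ℝ))).hasFDerivAt.comp_hasDerivAt t
      (pd_snd (fderiv ℝ F) hG s t)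
  have l2 : HasDerivAt (fun y => fderiv ℝ F (y, t) ((0 : ℝ), (1 : ℝ)))
      (fderiv ℝ (fderiv ℝ F) (s, t) ((1 : ℝ), (0 : ℝ)) ((0 : ℝ), (1 : ℝ))) s :=
    (ContinuousLinearMap.apply ℝ E ((0 : ℝ), (1 : ℝ))).hasFDerivAt.comp_hasDerivAt s
      (pd_fst (fderiv ℝ F) hG s t)
  calc deriv (fun x => deriv (fun y => F (y, x)) s) t
      = deriv (fun x => fderiv ℝ F (s, x) ((1 : ℝ), (0 : ℝ))) t := by
        congr 1; funext x; exact h1 x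
    _ = fderiv ℝ (fderiv ℝ F) (s, t) ((0 : ℝ), (1 : ℝ)) ((1 : ℝ), (0 : ℝ)) := l1.deriv
    _ = fderiv ℝ (fderiv ℝ F) (s, t) ((1 : ℝ), (0 : ℝ)) ((0 : ℝ), (1 : ℝ)) := hsym.eq _ _
    _ = deriv (fun y => fderiv ℝ F (y, t) ((0 : ℝ), (1 : ℝ))) s := l2.deriv.symm
    _ = deriv (fun y => deriv (fun x => F (y, x)) t) s := by
        congr 1; funext y; exact (h2 y).symm

end Helpers


theorem tangent_evolution_pseudo_null
    (γ T N B₁ B₂ : ℝ → ℝ → (Fin 4 → ℝ))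
    (k₁ k₂ k₃ α₁ α₂ α₃ α₄ : ℝ → ℝ → ℝ)
    (hγsmooth : ContDiff ℝ (⊤ : ℕ∞) (fun p : ℝ × ℝ => γ p.1 p.2))
    (hTsmooth : ContDiff ℝ (⊤ : ℕ∞) (fun p : ℝ × ℝ => T p.1 p.2))
    (hNsmooth : ContDiff ℝ (⊤ : ℕ∞) (fun p : ℝ × ℝ => N p.1 p.2))
    (hB₁smooth : ContDiff ℝ (⊤ : ℕ∞) (fun p : ℝ × ℝ => B₁ p.1 p.2))
    (hB₂smooth : ContDiff ℝ (⊤ : ℕ∞) (fun p : ℝ × ℝ => B₂ p.1 p.2))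
    (hk₂smooth : ContDiff ℝ (⊤ : ℕ∞) (fun p : ℝ × ℝ => k₂ p.1 p.2))
    (hk₃smooth : ContDiff ℝ (⊤ : ℕ∞) (fun p : ℝ × ℝ => k₃ p.1 p.2))
    (hα₁smooth : ContDiff ℝ (⊤ : ℕ∞) (fun p : ℝ × ℝ => α₁ p.1 p.2))
    (hα₂smooth : ContDiff ℝ (⊤ : ℕ∞) (fun p : ℝ × ℝ => α₂ p.1 p.2))
    (hα₃smooth : ContDiff ℝ (⊤ : ℕ∞) (fun p : ℝ × ℝ => α₃ p.1 p.2))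
    (hα₄smooth : ContDiff ℝ (⊤ : ℕ∞) (fun p : ℝ × ℝ => α₄ p.1 p.2))
    (hTT : ∀ s t : ℝ, mink (T s t) (T s t) = 1)
    (hB₁B₁ : ∀ s t : ℝ, mink (B₁ s t) (B₁ s t) = 1)
    (hNN : ∀ s t : ℝ, mink (N s t) (N s t) = 0)
    (hB₂B₂ : ∀ s t : ℝ, mink (B₂ s t) (B₂ s t) = 0)
    (hNB₂ : ∀ s t : ℝ, mink (N s t) (B₂ s t) = 1)
    (hTN : ∀ s t : ℝ, mink (T s t) (N s t) = 0)
    (hTB₁ : ∀ s t : ℝ, mink (T s t) (B₁ s t) = 0)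
    (hTB₂ : ∀ s t : ℝ, mink (T s t) (B₂ s t) = 0)
    (hNB₁ : ∀ s t : ℝ, mink (N s t) (B₁ s t) = 0)
    (hB₁B₂ : ∀ s t : ℝ, mink (B₁ s t) (B₂ s t) = 0)
    -- arclength parametrization and pseudo null Frenet equations (k₁ = 1)
    (hk₁ : ∀ s t : ℝ, k₁ s t = 1)
    (hT : ∀ s t : ℝ, T s t = deriv (fun x => γ x t) s)
    (hunit : ∀ s t : ℝ, mnorm (deriv (fun x => γ x t) s) = 1)
    (hfr₁ : ∀ s t : ℝ, deriv (fun x => T x t) s = k₁ s t • N s t)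
    (hfr₂ : ∀ s t : ℝ, deriv (fun x => N x t) s = k₂ s t • B₁ s t)
    (hfr₃ : ∀ s t : ℝ, deriv (fun x => B₁ x t) s = k₃ s t • N s t - k₂ s t • B₂ s t)
    (hfr₄ : ∀ s t : ℝ, deriv (fun x => B₂ x t) s = -(k₁ s t) • T s t - k₃ s t • B₁ s t)
    (hflow : ∀ s t : ℝ, deriv (fun x => γ s x) t =
      α₁ s t • T s t + α₂ s t • N s t + α₃ s t • B₁ s t + α₄ s t • B₂ s t)
    -- inextensibility: ∂α₁/∂s = α₄
    (hinext : ∀ s t : ℝ, deriv (fun x => α₁ x t) s = α₄ s t) :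
    ∀ s t : ℝ, deriv (fun x => T s x) t =
      (deriv (fun x => α₂ x t) s + α₁ s t + α₃ s t * k₃ s t) • N s t +
      (deriv (fun x => α₃ x t) s + α₂ s t * k₂ s t - α₄ s t * k₃ s t) • B₁ s t +
      (deriv (fun x => α₄ x t) s - α₃ s t * k₂ s t) • B₂ s t := by
  intro s t
  -- Step 1: swap the mixed partial derivatives of γ
  have step1 : deriv (fun x => T s x) t
      = deriv (fun y => deriv (fun x => γ y x) t) s := by
    have : (fun x => T s x) = fun x => deriv (fun y => γ y x) s := by
      funext x; exact hT s x
    rw [this]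
    exact mixed_partial (fun p : ℝ × ℝ => γ p.1 p.2) hγsmooth s t
  -- Step 2: rewrite the inner t-derivative using the flow equation
  have step2 : deriv (fun y => deriv (fun x => γ y x) t) s
      = deriv (fun y => α₁ y t • T y t + α₂ y t • N y t
          + α₃ y t • B₁ y t + α₄ y t • B₂ y t) s := by
    congr 1; funext y; exact hflow y t
  -- differentiability of the frame fields and coefficients in s
  have hT' : HasDerivAt (fun y => T y t) (deriv (fun y => T y t) s) s :=
    ((pd_fst (fun p : ℝ × ℝ => T p.1 p.2) hTsmooth s t).differentiableAt).hasDerivAt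
  have hN' : HasDerivAt (fun y => N y t) (deriv (fun y => N y t) s) s :=
    ((pd_fst (fun p : ℝ × ℝ => N p.1 p.2) hNsmooth s t).differentiableAt).hasDerivAt
  have hB₁' : HasDerivAt (fun y => B₁ y t) (deriv (fun y => B₁ y t) s) s :=
    ((pd_fst (fun p : ℝ × ℝ => B₁ p.1 p.2) hB₁smooth s t).differentiableAt).hasDerivAt
  have hB₂' : HasDerivAt (fun y => B₂ y t) (deriv (fun y => B₂ y t) s) s :=
    ((pd_fst (fun p : ℝ × ℝ => B₂ p.1 p.2) hB₂smooth s t).differentiableAt).hasDerivAt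
  have ha₁ : HasDerivAt (fun y => α₁ y t) (deriv (fun y => α₁ y t) s) s :=
    ((pd_fst (fun p : ℝ × ℝ => α₁ p.1 p.2) hα₁smooth s t).differentiableAt).hasDerivAt
  have ha₂ : HasDerivAt (fun y => α₂ y t) (deriv (fun y => α₂ y t) s) s :=
    ((pd_fst (fun p : ℝ × ℝ => α₂ p.1 p.2) hα₂smooth s t).differentiableAt).hasDerivAt
  have ha₃ : HasDerivAt (fun y => α₃ y t) (deriv (fun y => α₃ y t) s) s :=
    ((pd_fst (fun p : ℝ × ℝ => α₃ p.1 p.2) hα₃smooth s t).differentiableAt).hasDerivAt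
  have ha₄ : HasDerivAt (fun y => α₄ y t) (deriv (fun y => α₄ y t) s) s :=
    ((pd_fst (fun p : ℝ × ℝ => α₄ p.1 p.2) hα₄smooth s t).differentiableAt).hasDerivAt
  have key : HasDerivAt (fun y => α₁ y t • T y t + α₂ y t • N y t
          + α₃ y t • B₁ y t + α₄ y t • B₂ y t)
      ((α₁ s t • deriv (fun y => T y t) s + deriv (fun y => α₁ y t) s • T s t)
        + (α₂ s t • deriv (fun y => N y t) s + deriv (fun y => α₂ y t) s • N s t)
        + (α₃ s t • deriv (fun y => B₁ y t) s + deriv (fun y => α₃ y t) s • B₁ s t)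
        + (α₄ s t • deriv (fun y => B₂ y t) s + deriv (fun y => α₄ y t) s • B₂ s t)) s :=
    (((ha₁.smul hT').add (ha₂.smul hN')).add (ha₃.smul hB₁')).add (ha₄.smul hB₂')
  rw [step1, step2, key.deriv, hfr₁ s t, hfr₂ s t, hfr₃ s t, hfr₄ s t, hinext s t,
    hk₁ s t]
  module
end
end
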